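/- Let Γ be the semidirect product (ℚ³ ⊕ ℚ³) ⋊ SL(3,ℚ). Then Γ has no non-trivial finite dimensional unitary representations: for every n ∈ ℕ, every group homomorphism π from Γ to the unitary group U(n) of n×n complex matrices satisfies π(g) = 1 for all g ∈ Γ. -/

import Mathlib

open Matrix

/-- The additive group `R³ ⊕ R³`. -/
abbrev VV (R : Type*) := (Fin 3 → R) × (Fin 3 → R)

/-- Transpose, as a map on `SL(3,R)`. -/
def transposeSL {R : Type*} [CommRing R] (A : Matrix.SpecialLinearGroup (Fin 3) R) :
    Matrix.SpecialLinearGroup (Fin 3) R :=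
  ⟨A.val.transpose, by rw [Matrix.det_transpose]; exact A.prop⟩

/-- The group homomorphism `A ↦ (Aᵀ)⁻¹` on `SL(3,R)`. -/
def dualHom {R : Type*} [CommRing R] :
    Matrix.SpecialLinearGroup (Fin 3) R →* Matrix.SpecialLinearGroup (Fin 3) R where
  toFun A := (transposeSL A)⁻¹
  map_one' := by
    simp [transposeSL]
    exact inv_one (G := Matrix.SpecialLinearGroup (Fin 3) R)
  map_mul' A B := by
    show (transposeSL (A * B))⁻¹ = (transposeSL A)⁻¹ * (transposeSL B)⁻¹
    have h : transposeSL (A * B) = transposeSL B * transposeSL A :=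
      Subtype.ext (by simp [transposeSL, Matrix.transpose_mul]; rfl)
    rw [h, _root_.mul_inv_rev]

/-- The multiplicative group structure on `AddAut A` (as in older Mathlib, where
`AddAut A` was a multiplicative group). -/
instance addAutGroup (A : Type*) [Add A] : Group (AddAut A) where
  mul g h := AddEquiv.trans h g
  one := AddEquiv.refl _
  inv := AddEquiv.symm
  mul_assoc _ _ _ := rfl
  one_mul _ := rfl
  mul_one _ := rfl
  inv_mul_cancel := AddEquiv.self_trans_symm

/-- Linear automorphisms as additive automorphisms, as a group homomorphism. -/
def linToAddAut {R : Type*} [CommRing R] :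
    ((Fin 3 → R) ≃ₗ[R] (Fin 3 → R)) →* AddAut (Fin 3 → R) where
  toFun e := e.toAddEquiv
  map_one' := rfl
  map_mul' _ _ := rfl

/-- Pairs of additive automorphisms give additive automorphisms of the product. -/
def addAutProd {R : Type*} [CommRing R] :
    AddAut (Fin 3 → R) × AddAut (Fin 3 → R) →* AddAut (VV R) where
  toFun p := AddEquiv.prodCongr p.1 p.2
  map_one' := rfl
  map_mul' _ _ := rfl

/-- The action of `SL(3,R)` on `R³ ⊕ R³` given by `A · (x,y) = (Ax, (Aᵀ)⁻¹y)`,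
as a homomorphism into additive automorphisms. -/
noncomputable def sl3Act {R : Type*} [CommRing R] :
    Matrix.SpecialLinearGroup (Fin 3) R →* AddAut (VV R) :=
  addAutProd.comp
    (((linToAddAut.comp Matrix.SpecialLinearGroup.toLin')).prod
      ((linToAddAut.comp Matrix.SpecialLinearGroup.toLin').comp dualHom))

/-- Additive automorphisms as multiplicative automorphisms of `Multiplicative`. -/
def addAutToMulAut {A : Type*} [AddGroup A] : AddAut A →* MulAut (Multiplicative A) where
  toFun e := AddEquiv.toMultiplicative e
  map_one' := rfl
  map_mul' _ _ := rfl

/-- The action of `SL(3,R)` on `Multiplicative (R³ ⊕ R³)`. -/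
noncomputable def sl3ActM (R : Type*) [CommRing R] :
    Matrix.SpecialLinearGroup (Fin 3) R →* MulAut (Multiplicative (VV R)) :=
  addAutToMulAut.comp sl3Act

/-- The group `Γ_R = (R³ ⊕ R³) ⋊ SL(3,R)`. -/
abbrev GammaR (R : Type*) [CommRing R] :=
  SemidirectProduct (Multiplicative (VV R)) (Matrix.SpecialLinearGroup (Fin 3) R) (sl3ActM R)

/-- Coordinatewise integer casting `ℤ³ → ℚ³` as an additive homomorphism. -/
def intCast3 : (Fin 3 → ℤ) →+ (Fin 3 → ℚ) := (Int.castAddHom ℚ).compLeft (Fin 3)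

/-- The inclusion `ℤ³ ⊕ ℤ³ → ℚ³ ⊕ ℚ³`. -/
def intVec : VV ℤ →+ VV ℚ := intCast3.prodMap intCast3

/-- The subgroup `Λ = ℤ³ ⊕ ℤ³` of `Γ = (ℚ³ ⊕ ℚ³) ⋊ SL(3,ℚ)`. -/
noncomputable def LambdaSub : Subgroup (GammaR ℚ) :=
  (AddSubgroup.toSubgroup intVec.range).map SemidirectProduct.inl

/-- The dot product on `R³`. -/
def dotR {R : Type*} [CommRing R] (x y : Fin 3 → R) : R := ∑ i, x i * y i

/-- The 2-cocycle `Ω_α` on `ℚ³ ⊕ ℚ³`. -/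
noncomputable def OmegaQ (α : ℝ) (g h : VV ℚ) : Circle :=
  Circle.exp (2 * Real.pi * α * ((dotR g.1 h.2 - dotR g.2 h.1 : ℚ) : ℝ))

/-- The extension `Ω̃_α` of `Ω_α` to `Γ = (ℚ³ ⊕ ℚ³) ⋊ SL(3,ℚ)`. -/
noncomputable def OmegaT (α : ℝ) (g h : GammaR ℚ) : Circle :=
  OmegaQ α (Multiplicative.toAdd g.left) (sl3Act g.right (Multiplicative.toAdd h.left))


section SpectralCore

open Polynomial
open scoped ComplexOrder

lemma spec_iff_isRoot {k : ℕ} (A : Matrix (Fin k) (Fin k) ℂ) (μ : ℂ) :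
    μ ∈ spectrum ℂ A ↔ A.charpoly.IsRoot μ := by
  have hmap : (charmatrix A).map (eval μ) = algebraMap ℂ (Matrix (Fin k) (Fin k) ℂ) μ - A := by
    ext i j
    by_cases h : i = j
    · subst h
      simp [charmatrix_apply_eq, Matrix.algebraMap_matrix_apply]
    · simp [charmatrix_apply_ne _ _ _ h, Matrix.algebraMap_matrix_apply, h]
  have heval : A.charpoly.eval μ = ((charmatrix A).map (eval μ)).det := by
    rw [Matrix.charpoly]
    exact (RingHom.map_det (evalRingHom μ) (charmatrix A)).symm ▸ rfl
  rw [spectrum.mem_iff, Matrix.isUnit_iff_isUnit_det, isUnit_iff_ne_zero, not_not,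
    Polynomial.IsRoot, heval, hmap]

lemma herm_sq_zero {k : ℕ} : ∀ (j : ℕ) (B : Matrix (Fin k) (Fin k) ℂ), Bᴴ = B →
    B ^ (2 ^ j) = 0 → B = 0 := by
  intro j
  induction j with
  | zero => intro B _ h; simpa using h
  | succ j ih =>
    intro B hB h
    apply ih B hB
    have : (B ^ (2 ^ j))ᴴ * B ^ (2 ^ j) = 0 := by
      rw [conjTranspose_pow, hB, ← pow_add, ← two_mul, ← pow_succ']
      exact h
    exact Matrix.conjTranspose_mul_self_eq_zero.mp this

lemma nilpotent_normal_zero {k : ℕ} (w : Matrix (Fin k) (Fin k) ℂ)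
    (hcomm : wᴴ * w = w * wᴴ) (j : ℕ) (hw : w ^ (2 ^ j) = 0) : w = 0 := by
  have hx : (wᴴ * w) ^ (2 ^ j) = 0 := by
    rw [Commute.mul_pow hcomm, hw, mul_zero]
  have hherm : (wᴴ * w)ᴴ = wᴴ * w := by
    rw [conjTranspose_mul, conjTranspose_conjTranspose]
  exact Matrix.conjTranspose_mul_self_eq_zero.mp (herm_sq_zero j _ hherm hx)

/-- The uniform exponent. -/
def expN (k m : ℕ) : ℕ := m ^ k * ∏ j ∈ Finset.range k, (m ^ (j + 1) - 1)

lemma expN_pos (k m : ℕ) (hm : 2 ≤ m) : 0 < expN k m := by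
  apply Nat.mul_pos (Nat.pow_pos (by omega))
  apply Finset.prod_pos
  intro j _
  have : 2 ^ (j+1) ≤ m ^ (j+1) := Nat.pow_le_pow_left hm _
  have : 2 ≤ 2 ^ (j+1) := Nat.le_self_pow (by omega) 2
  omega

lemma eig_pow_eq_one {k m : ℕ} (hm : 2 ≤ m) (A : Matrix (Fin k) (Fin k) ℂ)
    (hstab : (fun x => x ^ m) '' spectrum ℂ A = spectrum ℂ A)
    (h0 : (0:ℂ) ∉ spectrum ℂ A) {μ : ℂ} (hμ : μ ∈ spectrum ℂ A) :
    μ ^ expN k m = 1 := by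
  -- iterates stay in the spectrum
  have hiter : ∀ i : ℕ, μ ^ (m ^ i) ∈ spectrum ℂ A := by
    intro i
    induction i with
    | zero => simpa using hμ
    | succ i ih =>
      have : (μ ^ (m ^ i)) ^ m ∈ spectrum ℂ A := by
        rw [← hstab]; exact ⟨_, ih, rfl⟩
      rwa [← pow_mul, ← pow_succ] at this
  -- spectrum is contained in the root finset of the charpoly
  have hsub : ∀ x ∈ spectrum ℂ A, x ∈ A.charpoly.roots.toFinset := by
    intro x hx
    rw [Multiset.mem_toFinset, mem_roots ((A.charpoly_monic).ne_zero)]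
    exact (spec_iff_isRoot A x).mp hx
  have hcard : A.charpoly.roots.toFinset.card ≤ k := by
    refine le_trans (Multiset.toFinset_card_le _) ?_
    refine le_trans (Polynomial.card_roots' _) ?_
    simp [Matrix.charpoly_natDegree_eq_dim]
  -- pigeonhole
  obtain ⟨a, -, b, -, hab, heq⟩ :
      ∃ a ∈ (Finset.univ : Finset (Fin (k+1))), ∃ b ∈ Finset.univ, a ≠ b ∧
        μ ^ (m ^ (a:ℕ)) = μ ^ (m ^ (b:ℕ)) := by
    obtain ⟨a, ha, b, hb, hne, he⟩ :=
      Finset.exists_ne_map_eq_of_card_lt_of_maps_to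
        (s := (Finset.univ : Finset (Fin (k+1)))) (t := A.charpoly.roots.toFinset)
        (by simpa using Nat.lt_succ_of_le hcard)
        (fun i _ => hsub _ (hiter (i:ℕ)))
    exact ⟨a, ha, b, hb, hne, he⟩
  -- wlog a < b
  wlog hlt : (a:ℕ) < (b:ℕ) generalizing a b
  · have hvne : (a:ℕ) ≠ (b:ℕ) := fun h => hab (Fin.val_injective h)
    exact this b a hab.symm heq.symm (by omega)
  · have hμ0 : μ ≠ 0 := fun h => h0 (h ▸ hμ)
    have hle : m ^ (a:ℕ) ≤ m ^ (b:ℕ) := Nat.pow_le_pow_right (by omega) (le_of_lt hlt)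
    have hone : μ ^ (m ^ (b:ℕ) - m ^ (a:ℕ)) = 1 := by
      have h2 : μ ^ (m ^ (a:ℕ)) * μ ^ (m ^ (b:ℕ) - m ^ (a:ℕ)) = μ ^ (m ^ (a:ℕ)) * 1 := by
        rw [← pow_add, Nat.add_sub_cancel' hle, mul_one]
        exact heq.symm
      exact mul_left_cancel₀ (pow_ne_zero _ hμ0) h2
    -- divisibility
    have hd : (m ^ (b:ℕ) - m ^ (a:ℕ)) ∣ expN k m := by
      have hbk : (b:ℕ) ≤ k := Nat.lt_succ_iff.mp b.isLt
      have heq2 : m ^ (b:ℕ) - m ^ (a:ℕ) = m ^ (a:ℕ) * (m ^ ((b:ℕ) - (a:ℕ)) - 1) := by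
        rw [Nat.mul_sub, mul_one, ← pow_add, Nat.add_sub_cancel' (le_of_lt hlt)]
      rw [heq2]
      apply mul_dvd_mul
      · exact pow_dvd_pow m (by omega)
      · have hmem : ((b:ℕ) - (a:ℕ) - 1) ∈ Finset.range k := by
          simp only [Finset.mem_range]; omega
        have := Finset.dvd_prod_of_mem (fun j => m ^ (j + 1) - 1) hmem
        have hexp : (b:ℕ) - (a:ℕ) - 1 + 1 = (b:ℕ) - (a:ℕ) := by omega
        rwa [hexp] at this
    obtain ⟨c, hc⟩ := hd
    rw [hc, pow_mul, hone, one_pow]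

lemma unitary_conj_pow_eq_one {k m : ℕ} (hm : 2 ≤ m)
    (u c : Matrix.unitaryGroup (Fin k) ℂ) (h : c * u * c⁻¹ = u ^ m) :
    u ^ expN k m = 1 := by
  set A : Matrix (Fin k) (Fin k) ℂ := (u : Matrix (Fin k) (Fin k) ℂ) with hA
  -- spectrum stability
  have hconj : (c : Matrix (Fin k) (Fin k) ℂ) * A * star (c : Matrix (Fin k) (Fin k) ℂ)
      = A ^ m := by
    have := congrArg (Subtype.val) h
    rw [← Unitary.star_eq_inv] at this
    simpa using this
  have hstab : (fun x => x ^ m) '' spectrum ℂ A = spectrum ℂ A := by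
    rw [← spectrum.map_pow_of_pos A (by omega : 0 < m), ← hconj,
      Unitary.spectrum_star_right_conjugate]
  have h0 : (0:ℂ) ∉ spectrum ℂ A := spectrum.zero_notMem ℂ (Unitary.toUnits u).isUnit
  -- all eigenvalues of A^N are 1
  set N := expN k m with hN
  have hNpos : 0 < N := expN_pos k m hm
  have hspecAN : spectrum ℂ (A ^ N) ⊆ {1} := by
    rw [spectrum.map_pow_of_pos A hNpos]
    rintro x ⟨μ, hμ, rfl⟩
    exact eig_pow_eq_one hm A hstab h0 hμ
  -- charpoly of A^N is (X - 1)^k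
  set v := A ^ N with hv
  have hcp : v.charpoly = (X - C 1) ^ k := by
    have hmon := v.charpoly_monic
    have hsplit : v.charpoly.Splits := IsAlgClosed.splits _
    have hroots : v.charpoly.roots = Multiset.replicate k 1 := by
      rw [Multiset.eq_replicate]
      constructor
      · rw [(Polynomial.splits_iff_card_roots).mp hsplit, Matrix.charpoly_natDegree_eq_dim]
        simp
      · intro x hx
        have : x ∈ spectrum ℂ v :=
          (spec_iff_isRoot v x).mpr (isRoot_of_mem_roots hx)
        exact hspecAN this
    have := hsplit.eq_prod_roots_of_monic hmon
    rw [hroots, Multiset.map_replicate, Multiset.prod_replicate] at this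
    exact this
  -- Cayley–Hamilton
  have hnil : (v - 1) ^ k = 0 := by
    have := Matrix.aeval_self_charpoly v
    rw [hcp] at this
    simpa using this
  -- v is unitary
  have hvmem : v ∈ Matrix.unitaryGroup (Fin k) ℂ := by
    have := (u ^ N).prop
    simpa [hv, hA] using this
  have h1 : star v * v = 1 := Unitary.star_mul_self_of_mem hvmem
  have h2 : v * star v = 1 := Unitary.mul_star_self_of_mem hvmem
  have hcomm : (v - 1)ᴴ * (v - 1) = (v - 1) * (v - 1)ᴴ := by
    rw [← Matrix.star_eq_conjTranspose, star_sub, star_one]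
    have e1 : (star v - 1) * (v - 1) = star v * v - star v - v + 1 := by noncomm_ring
    have e2 : (v - 1) * (star v - 1) = v * star v - v - star v + 1 := by noncomm_ring
    rw [e1, e2, h1, h2]
    abel
  have hnil2 : (v - 1) ^ (2 ^ k) = 0 := by
    have hk : k ≤ 2 ^ k := Nat.le_of_lt Nat.lt_two_pow_self
    rw [← Nat.add_sub_cancel' hk, pow_add, hnil, zero_mul]
  have hv1 : v = 1 := by
    have := nilpotent_normal_zero (v - 1) hcomm k hnil2
    rwa [sub_eq_zero] at this
  -- conclude
  apply Subtype.ext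
  simpa [hA] using hv1

end SpectralCore

lemma qfam {k m : ℕ} (hm : 2 ≤ m) (f : ℚ → Matrix.unitaryGroup (Fin k) ℂ)
    (hadd : ∀ s t, f (s + t) = f s * f t)
    (c : Matrix.unitaryGroup (Fin k) ℂ)
    (hconj : ∀ t, c * f t * c⁻¹ = f ((m : ℚ) * t)) (t : ℚ) : f t = 1 := by
  have hpow : ∀ (j : ℕ) (s : ℚ), f ((j : ℚ) * s) = f s ^ j := by
    intro j
    induction j with
    | zero =>
      intro s
      have h0 := (hadd 0 0).symm
      rw [add_zero] at h0
      have h1 : f 0 * f 0 = f 0 * 1 := by rw [mul_one]; exact h0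
      have : f 0 = 1 := mul_left_cancel h1
      simpa [this]
    | succ j ih =>
      intro s
      push_cast
      rw [add_mul, one_mul, hadd, ih, pow_succ]
  have hrel : ∀ s, c * f s * c⁻¹ = f s ^ m := by
    intro s
    rw [hconj s, hpow]
  have hN : ∀ s, f s ^ expN k m = 1 := fun s =>
    unitary_conj_pow_eq_one hm (f s) c (hrel s)
  have hNne : (expN k m : ℚ) ≠ 0 := by
    have := expN_pos k m hm
    positivity
  calc f t = f ((expN k m : ℚ) * (t / expN k m)) := by
        rw [mul_div_cancel₀]; exact hNne
    _ = f (t / expN k m) ^ expN k m := hpow _ _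
    _ = 1 := hN _

abbrev SL3 := Matrix.SpecialLinearGroup (Fin 3) ℚ

/-- Transvections as `SL3` elements. -/
def tsl (i j : Fin 3) (hij : i ≠ j) (c : ℚ) : SL3 :=
  ⟨transvection i j c, det_transvection_of_ne i j hij c⟩

lemma tsl_mul (i j : Fin 3) (hij : i ≠ j) (c d : ℚ) :
    tsl i j hij c * tsl i j hij d = tsl i j hij (c + d) :=
  Subtype.ext (transvection_mul_transvection_same i j hij c d)

/-- diagonal matrices as `SL3` elements. -/
def dsl (d : Fin 3 → ℚ) (hd : (diagonal d).det = 1) : SL3 := ⟨diagonal d, hd⟩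

lemma diag_mul_transvection (d : Fin 3 → ℚ) (i j : Fin 3) (hij : i ≠ j) (c : ℚ) (hj : d j ≠ 0) :
    diagonal d * transvection i j c = transvection i j (d i * c * (d j)⁻¹) * diagonal d := by
  ext a b
  rw [Matrix.diagonal_mul, Matrix.mul_diagonal]
  simp only [transvection, Matrix.add_apply, Matrix.one_apply, Matrix.single,
    Matrix.of_apply, mul_add, add_mul]
  by_cases hab : a = b
  · subst hab
    by_cases h1 : i = a ∧ j = a
    · exact absurd (h1.1.trans h1.2.symm) hij
    · simp only [h1, if_pos rfl, if_true, if_false, mul_zero, zero_mul, mul_one, one_mul]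
  · simp only [hab, if_false, mul_zero, zero_mul, add_zero, zero_add]
    by_cases h1 : i = a ∧ j = b
    · obtain ⟨rfl, rfl⟩ := h1
      simp only [and_self, if_pos rfl, if_true]
      field_simp
    · simp [h1]

lemma dsl_conj_tsl (d : Fin 3 → ℚ) (hd : (diagonal d).det = 1) (i j : Fin 3) (hij : i ≠ j)
    (c : ℚ) (hj : d j ≠ 0) :
    dsl d hd * tsl i j hij c * (dsl d hd)⁻¹ = tsl i j hij (d i * c * (d j)⁻¹) := by
  rw [mul_inv_eq_iff_eq_mul]
  exact Subtype.ext (diag_mul_transvection d i j hij c hj)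


lemma w01 (a : ℚ) (ha : a ≠ 0) :
    transvection (0:Fin 3) 1 a * transvection 1 0 (-a⁻¹) * transvection 0 1 a
    = diagonal ![a, a⁻¹, 1] *
      (transvection (0:Fin 3) 1 1 * transvection 1 0 (-1) * transvection 0 1 1) := by
  ext p q
  fin_cases p <;> fin_cases q <;>
    simp [transvection, Matrix.mul_apply, Fin.sum_univ_three, Matrix.single,
      Matrix.one_apply, Matrix.diagonal] <;> field_simp <;> norm_num

lemma w12 (a : ℚ) (ha : a ≠ 0) :
    transvection (1:Fin 3) 2 a * transvection 2 1 (-a⁻¹) * transvection 1 2 a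
    = diagonal ![1, a, a⁻¹] *
      (transvection (1:Fin 3) 2 1 * transvection 2 1 (-1) * transvection 1 2 1) := by
  ext p q
  fin_cases p <;> fin_cases q <;>
    simp [transvection, Matrix.mul_apply, Fin.sum_univ_three, Matrix.single,
      Matrix.one_apply, Matrix.diagonal] <;> field_simp <;> norm_num

section
variable {k : ℕ} (ρ : SL3 →* Matrix.unitaryGroup (Fin k) ℂ)
  (htsl : ∀ (i j : Fin 3) (hij : i ≠ j) (c : ℚ), ρ (tsl i j hij c) = 1)

lemma det_diag01 (a : ℚ) (ha : a ≠ 0) : (diagonal ![a, a⁻¹, (1:ℚ)]).det = 1 := by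
  rw [det_diagonal, Fin.prod_univ_three]
  simp
  field_simp

lemma det_diag12 (a : ℚ) (ha : a ≠ 0) : (diagonal ![(1:ℚ), a, a⁻¹]).det = 1 := by
  rw [det_diagonal, Fin.prod_univ_three]
  simp
  field_simp

include htsl

lemma rho_diag01 (a : ℚ) (ha : a ≠ 0) : ρ (dsl ![a, a⁻¹, 1] (det_diag01 a ha)) = 1 := by
  have h01 : (0 : Fin 3) ≠ 1 := by decide
  have h10 : (1 : Fin 3) ≠ 0 := by decide
  set w : ℚ → SL3 := fun b => tsl 0 1 h01 b * tsl 1 0 h10 (-b⁻¹) * tsl 0 1 h01 b with hw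
  have key : w a = dsl ![a, a⁻¹, 1] (det_diag01 a ha) * w 1 := by
    apply Subtype.ext
    simp only [hw, Matrix.SpecialLinearGroup.coe_mul]
    simp only [hw, tsl, dsl, Matrix.SpecialLinearGroup.coe_mul]
    simpa using w01 a ha
  have hρw : ∀ b, ρ (w b) = 1 := by
    intro b
    rw [hw]
    simp only [_root_.map_mul, htsl, mul_one, one_mul]
  have : ρ (w a) = ρ (dsl ![a, a⁻¹, 1] (det_diag01 a ha)) * ρ (w 1) := by
    rw [key, _root_.map_mul]
  rw [hρw, hρw] at this
  rw [mul_one] at this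
  exact this.symm

lemma rho_diag12 (a : ℚ) (ha : a ≠ 0) : ρ (dsl ![1, a, a⁻¹] (det_diag12 a ha)) = 1 := by
  have h12 : (1 : Fin 3) ≠ 2 := by decide
  have h21 : (2 : Fin 3) ≠ 1 := by decide
  set w : ℚ → SL3 := fun b => tsl 1 2 h12 b * tsl 2 1 h21 (-b⁻¹) * tsl 1 2 h12 b with hw
  have key : w a = dsl ![1, a, a⁻¹] (det_diag12 a ha) * w 1 := by
    apply Subtype.ext
    simp only [hw, Matrix.SpecialLinearGroup.coe_mul]
    simp only [hw, tsl, dsl, Matrix.SpecialLinearGroup.coe_mul]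
    simpa using w12 a ha
  have hρw : ∀ b, ρ (w b) = 1 := by
    intro b
    rw [hw]
    simp only [_root_.map_mul, htsl, mul_one, one_mul]
  have : ρ (w a) = ρ (dsl ![1, a, a⁻¹] (det_diag12 a ha)) * ρ (w 1) := by
    rw [key, _root_.map_mul]
  rw [hρw, hρw] at this
  rw [mul_one] at this
  exact this.symm

lemma rho_diag (d : Fin 3 → ℚ) (hd : (diagonal d).det = 1) : ρ (dsl d hd) = 1 := by
  have hprod : d 0 * d 1 * d 2 = 1 := by
    have := hd
    rwa [det_diagonal, Fin.prod_univ_three] at this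
  have h0 : d 0 ≠ 0 := fun h => by simp [h] at hprod
  have h1 : d 1 ≠ 0 := fun h => by simp [h] at hprod
  have h01 : d 0 * d 1 ≠ 0 := mul_ne_zero h0 h1
  have hsplit : dsl d hd =
      dsl ![d 0, (d 0)⁻¹, 1] (det_diag01 _ h0) *
      dsl ![1, d 0 * d 1, (d 0 * d 1)⁻¹] (det_diag12 _ h01) := by
    apply Subtype.ext
    simp only [Matrix.SpecialLinearGroup.coe_mul]
    simp only [dsl, Matrix.SpecialLinearGroup.coe_mul]
    rw [diagonal_mul_diagonal]
    have hfun : d = fun i => ![d 0, (d 0)⁻¹, 1] i * ![1, d 0 * d 1, (d 0 * d 1)⁻¹] i := by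
      funext i
      fin_cases i
      · simp
      · simp; field_simp
      · simp
        field_simp
        linear_combination hprod
    rw [← hfun]
  rw [hsplit, _root_.map_mul, rho_diag01 ρ htsl _ h0, rho_diag12 ρ htsl _ h01, mul_one]

lemma rho_trivial (g : SL3) : ρ g = 1 := by
  obtain ⟨L, L', D, hM⟩ :=
    Matrix.Pivot.exists_list_transvec_mul_diagonal_mul_list_transvec (g : Matrix (Fin 3) (Fin 3) ℚ)
  have lift : ∀ (L : List (TransvectionStruct (Fin 3) ℚ)), ∃ h : SL3,
      (h : Matrix (Fin 3) (Fin 3) ℚ) = (L.map TransvectionStruct.toMatrix).prod ∧ ρ h = 1 := by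
    intro L
    induction L with
    | nil => exact ⟨1, by simp, _root_.map_one ρ⟩
    | cons t L ih =>
      obtain ⟨h, hval, hρ⟩ := ih
      rcases t with ⟨i, j, hij, c⟩
      refine ⟨tsl i j hij c * h, ?_, by rw [_root_.map_mul, htsl, hρ, one_mul]⟩
      simp only [Matrix.SpecialLinearGroup.coe_mul]
      simp only [tsl, Matrix.SpecialLinearGroup.coe_mul]
      rw [hval]
      simp [TransvectionStruct.toMatrix_mk]
  obtain ⟨P, hP, hρP⟩ := lift L
  obtain ⟨Q, hQ, hρQ⟩ := lift L'
  have hdet : (diagonal D).det = 1 := by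
    have hg := g.prop
    rw [hM, det_mul, det_mul, ← hP, ← hQ] at hg
    have dP : ((P : Matrix (Fin 3) (Fin 3) ℚ)).det = 1 := P.prop
    have dQ : ((Q : Matrix (Fin 3) (Fin 3) ℚ)).det = 1 := Q.prop
    rw [dP, dQ, one_mul, mul_one] at hg
    exact hg
  have hgeq : g = P * dsl D hdet * Q := by
    apply Subtype.ext
    simp only [Matrix.SpecialLinearGroup.coe_mul]
    simp only [dsl, Matrix.SpecialLinearGroup.coe_mul]
    rw [hP, hQ]
    exact hM
  rw [hgeq, _root_.map_mul, _root_.map_mul, hρP, hρQ, rho_diag ρ htsl, one_mul, mul_one]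

end


section Gamma

open SemidirectProduct

lemma sl3Act_apply (A : SL3) (v : VV ℚ) :
    sl3Act A v = (Matrix.SpecialLinearGroup.toLin' A v.1,
      Matrix.SpecialLinearGroup.toLin' (dualHom A) v.2) := rfl

lemma sl3ActM_apply (A : SL3) (v : VV ℚ) :
    sl3ActM ℚ A (Multiplicative.ofAdd v) = Multiplicative.ofAdd (sl3Act A v) := rfl

lemma det_diag_inv (d : Fin 3 → ℚ) (hd : (diagonal d).det = 1) :
    (diagonal fun k => (d k)⁻¹).det = 1 := by
  rw [det_diagonal] at hd ⊢
  rw [Finset.prod_inv_distrib, hd, inv_one]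

lemma dsl_inv (d : Fin 3 → ℚ) (hd : (diagonal d).det = 1) (hne : ∀ k, d k ≠ 0) :
    (dsl d hd)⁻¹ = dsl (fun k => (d k)⁻¹) (det_diag_inv d hd) := by
  apply inv_eq_of_mul_eq_one_right
  apply Subtype.ext
  simp only [Matrix.SpecialLinearGroup.coe_mul]
  simp only [dsl, Matrix.SpecialLinearGroup.coe_mul, Matrix.SpecialLinearGroup.coe_one]
  rw [diagonal_mul_diagonal]
  have : (fun k => d k * (d k)⁻¹) = fun _ => (1:ℚ) := by
    funext k; exact mul_inv_cancel₀ (hne k)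
  rw [this, diagonal_one]

lemma transposeSL_dsl (d : Fin 3 → ℚ) (hd : (diagonal d).det = 1) :
    transposeSL (dsl d hd) = dsl d hd :=
  Subtype.ext (Matrix.diagonal_transpose d)

lemma dualHom_dsl (d : Fin 3 → ℚ) (hd : (diagonal d).det = 1) (hne : ∀ k, d k ≠ 0) :
    dualHom (dsl d hd) = dsl (fun k => (d k)⁻¹) (det_diag_inv d hd) := by
  show (transposeSL (dsl d hd))⁻¹ = _
  rw [transposeSL_dsl, dsl_inv d hd hne]

lemma toLin'_dsl_single (d : Fin 3 → ℚ) (hd : (diagonal d).det = 1) (i : Fin 3) (t : ℚ) :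
    Matrix.SpecialLinearGroup.toLin' (dsl d hd) (Pi.single i t) = Pi.single i (d i * t) := by
  rw [Matrix.SpecialLinearGroup.toLin'_apply, Matrix.toLin'_apply]
  exact diagonal_mulVec_single d i t

end Gamma

section Main

open SemidirectProduct

def dvec (i : Fin 3) : Fin 3 → ℚ := fun k => if k = i then 2 else if k = i + 1 then 2⁻¹ else 1

lemma dvec_det (i : Fin 3) : (diagonal (dvec i)).det = 1 := by
  rw [det_diagonal, Fin.prod_univ_three]
  fin_cases i <;> simp [dvec, Fin.ext_iff] <;> norm_num

lemma dvec_ne (i : Fin 3) : ∀ k, dvec i k ≠ 0 := by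
  intro k
  fin_cases i <;> fin_cases k <;> simp [dvec, Fin.ext_iff] <;> norm_num

lemma dvec_self (i : Fin 3) : dvec i i = 2 := by simp [dvec]

variable {n : ℕ} (π : GammaR ℚ →* Matrix.unitaryGroup (Fin n) ℂ)

lemma pi_inl_fst (i : Fin 3) (t : ℚ) :
    π (inl (Multiplicative.ofAdd ((Pi.single i t, 0) : VV ℚ))) = 1 := by
  set f : ℚ → Matrix.unitaryGroup (Fin n) ℂ :=
    fun s => π (inl (Multiplicative.ofAdd ((Pi.single i s, 0) : VV ℚ))) with hf
  have hadd : ∀ s t, f (s + t) = f s * f t := by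
    intro s t
    have harg : ((Pi.single i (s + t), 0) : VV ℚ)
        = (Pi.single i s, 0) + (Pi.single i t, 0) := by
      rw [Prod.mk_add_mk, Pi.single_add, add_zero]
    rw [hf]
    simp only [harg, ofAdd_add, _root_.map_mul]
  set D : SL3 := dsl (dvec i) (dvec_det i) with hD
  have hconj : ∀ t, π (inr D) * f t * (π (inr D))⁻¹ = f (((2:ℕ):ℚ) * t) := by
    intro t
    have hact : sl3ActM ℚ D (Multiplicative.ofAdd ((Pi.single i t, 0) : VV ℚ))
        = Multiplicative.ofAdd ((Pi.single i (((2:ℕ):ℚ) * t), 0) : VV ℚ) := by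
      rw [sl3ActM_apply, sl3Act_apply]
      have h1 : Matrix.SpecialLinearGroup.toLin' D (Pi.single i t)
          = Pi.single i (((2:ℕ):ℚ) * t) := by
        rw [hD, toLin'_dsl_single, dvec_self]
        norm_num
      have h2 : Matrix.SpecialLinearGroup.toLin' (dualHom D) (0 : Fin 3 → ℚ) = 0 :=
        _root_.map_zero _
      rw [show ((Pi.single i t, 0) : VV ℚ).1 = Pi.single i t from rfl]
      rw [show ((Pi.single i t, 0) : VV ℚ).2 = 0 from rfl]
      rw [h1, h2]
    have hrel := inl_aut (φ := sl3ActM ℚ) D (Multiplicative.ofAdd ((Pi.single i t, 0) : VV ℚ))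
    rw [hact] at hrel
    have := congrArg π hrel.symm
    rw [_root_.map_mul, _root_.map_mul, _root_.map_inv, _root_.map_inv] at this
    exact this
  exact qfam (by norm_num) f hadd (π (inr D)) hconj t

lemma pi_inl_snd (i : Fin 3) (t : ℚ) :
    π (inl (Multiplicative.ofAdd ((0, Pi.single i t) : VV ℚ))) = 1 := by
  set f : ℚ → Matrix.unitaryGroup (Fin n) ℂ :=
    fun s => π (inl (Multiplicative.ofAdd ((0, Pi.single i s) : VV ℚ))) with hf
  have hadd : ∀ s t, f (s + t) = f s * f t := by
    intro s t
    have harg : ((0, Pi.single i (s + t)) : VV ℚ)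
        = (0, Pi.single i s) + (0, Pi.single i t) := by
      rw [Prod.mk_add_mk, Pi.single_add, add_zero]
    rw [hf]
    simp only [harg, ofAdd_add, _root_.map_mul]
  obtain ⟨E, hE⟩ : ∃ E : SL3, E = (dsl (dvec i) (dvec_det i))⁻¹ := ⟨_, rfl⟩
  have hEeq : E = dsl (fun k => (dvec i k)⁻¹) (det_diag_inv _ (dvec_det i)) := by
    rw [hE, dsl_inv _ _ (dvec_ne i)]
  have hconj : ∀ t, π (inr E) * f t * (π (inr E))⁻¹ = f (((2:ℕ):ℚ) * t) := by
    intro t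
    have hact : sl3ActM ℚ E (Multiplicative.ofAdd ((0, Pi.single i t) : VV ℚ))
        = Multiplicative.ofAdd ((0, Pi.single i (((2:ℕ):ℚ) * t)) : VV ℚ) := by
      rw [sl3ActM_apply, sl3Act_apply]
      have h1 : Matrix.SpecialLinearGroup.toLin' E (0 : Fin 3 → ℚ) = 0 :=
        _root_.map_zero _
      have h2 : Matrix.SpecialLinearGroup.toLin' (dualHom E) (Pi.single i t)
          = Pi.single i (((2:ℕ):ℚ) * t) := by
        rw [hEeq, dualHom_dsl _ _ (fun k => inv_ne_zero (dvec_ne i k)), toLin'_dsl_single]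
        rw [inv_inv, dvec_self]
        norm_num
      rw [show ((0, Pi.single i t) : VV ℚ).1 = 0 from rfl]
      rw [show ((0, Pi.single i t) : VV ℚ).2 = Pi.single i t from rfl]
      rw [h1, h2]
    have hrel := inl_aut (φ := sl3ActM ℚ) E (Multiplicative.ofAdd ((0, Pi.single i t) : VV ℚ))
    rw [hact] at hrel
    have := congrArg π hrel.symm
    rw [_root_.map_mul, _root_.map_mul, _root_.map_inv, _root_.map_inv] at this
    exact this
  exact qfam (by norm_num) f hadd (π (inr E)) hconj t

lemma pi_inl (v : VV ℚ) : π (inl (Multiplicative.ofAdd v)) = 1 := by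
  obtain ⟨x, y⟩ := v
  have hx : ((x, y) : VV ℚ) =
      (Pi.single 0 (x 0), 0) + (Pi.single 1 (x 1), 0) + (Pi.single 2 (x 2), 0)
      + (0, Pi.single 0 (y 0)) + (0, Pi.single 1 (y 1)) + (0, Pi.single 2 (y 2)) := by
    refine Prod.ext ?_ ?_
    · show x = _
      funext k
      fin_cases k <;> simp
    · show y = _
      funext k
      fin_cases k <;> simp
  rw [hx]
  simp only [ofAdd_add, _root_.map_mul]
  rw [pi_inl_fst, pi_inl_fst, pi_inl_fst, pi_inl_snd, pi_inl_snd, pi_inl_snd]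
  simp

end Main

/-- `Γ = (ℚ³ ⊕ ℚ³) ⋊ SL(3,ℚ)` has no non-trivial finite dimensional unitary
representations: every homomorphism `Γ →* U(n)` is trivial. -/
theorem no_nontrivial_findim_unitary_rep (n : ℕ)
    (π : GammaR ℚ →* Matrix.unitaryGroup (Fin n) ℂ) (g : GammaR ℚ) :
    π g = 1 := by
  classical
  obtain ⟨ρ, hρ⟩ : ∃ ρ : SL3 →* Matrix.unitaryGroup (Fin n) ℂ,
      ρ = π.comp (SemidirectProduct.inr (φ := sl3ActM ℚ)) := ⟨_, rfl⟩
  have hρapp : ∀ A : SL3, ρ A = π (SemidirectProduct.inr A) := fun A => by rw [hρ]; rfl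
  have htsl : ∀ (i j : Fin 3) (hij : i ≠ j) (c : ℚ), ρ (tsl i j hij c) = 1 := by
    intro i j hij c
    obtain ⟨dtv, hdtv⟩ : ∃ d : Fin 3 → ℚ,
        d = fun k => if k = i then 2 else if k = j then 2⁻¹ else 1 := ⟨_, rfl⟩
    have hdet : (diagonal dtv).det = 1 := by
      rw [hdtv, det_diagonal, Fin.prod_univ_three]
      fin_cases i <;> fin_cases j <;> simp [Fin.ext_iff] at hij ⊢ <;> norm_num
    have hj : dtv j ≠ 0 := by
      rw [hdtv]
      simp [Ne.symm hij]
    set f : ℚ → Matrix.unitaryGroup (Fin n) ℂ :=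
      fun t => ρ (tsl i j hij t) with hf
    have hadd : ∀ s t, f (s + t) = f s * f t := by
      intro s t
      rw [hf]
      simp only [← tsl_mul i j hij s t, _root_.map_mul]
    have hconj : ∀ t, ρ (dsl dtv hdet) * f t * (ρ (dsl dtv hdet))⁻¹ = f (((4:ℕ):ℚ) * t) := by
      intro t
      have hkey := dsl_conj_tsl dtv hdet i j hij t hj
      have hval : dtv i * t * (dtv j)⁻¹ = ((4:ℕ):ℚ) * t := by
        rw [hdtv]
        simp [Ne.symm hij]
        push_cast
        ring
      rw [hval] at hkey
      have := congrArg ρ hkey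
      rw [_root_.map_mul, _root_.map_mul, _root_.map_inv] at this
      exact this
    exact qfam (by norm_num) f hadd _ hconj c
  have hSL : ∀ A : SL3, π (SemidirectProduct.inr A) = 1 := fun A =>
    (hρapp A).symm.trans (rho_trivial ρ htsl A)
  have h1 : π (SemidirectProduct.inl g.left) = 1 := by
    have := pi_inl π (Multiplicative.toAdd g.left)
    rwa [ofAdd_toAdd] at this
  conv_lhs => rw [← SemidirectProduct.inl_left_mul_inr_right g]
  rw [_root_.map_mul, h1, hSL, one_mul]
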